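/- Let X be a separable metric space with its Borel σ-algebra, let f : X → X be a Borel measurable map, and let μ be a Borel probability measure that is ergodic for f. If μ has an atom (i.e., μ({x}) > 0 for some x ∈ X), then there exist a natural number k ≥ 1 and a point x ∈ X with f^k(x) = x such that μ = (1/k) · Σ_{i=0}^{k−1} δ_{f^i(x)}; in particular every atom of μ has the same weight 1/k and μ is supported on a single periodic orbit of f consisting of exactly k points. -/

import Mathlib

open MeasureTheory

/-- The atomic case: an ergodic measure with an atom is uniformly distributed on a
single periodic orbit consisting of exactly `k` points, each of weight `1/k`. -/
theorem stmt_2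
    {X : Type*} [MetricSpace X] [TopologicalSpace.SeparableSpace X]
    [MeasurableSpace X] [BorelSpace X]
    (f : X → X) (μ : Measure X) [IsProbabilityMeasure μ]
    (herg : Ergodic f μ)
    (hatom : ∃ x : X, 0 < μ {x}) :
    ∃ (k : ℕ) (x : X), 1 ≤ k ∧ f^[k] x = x ∧
      (∀ i j : ℕ, i < k → j < k → f^[i] x = f^[j] x → i = j) ∧
      μ = (k : ENNReal)⁻¹ • ∑ i ∈ Finset.range k, Measure.dirac (f^[i] x) := by
  obtain ⟨x₀, hx₀⟩ := hatom
  have hmp := herg.toMeasurePreserving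
  have hmeas : ∀ n : ℕ, Measurable (f^[n]) := fun n => (hmp.iterate n).measurable
  have hpre : ∀ n : ℕ, μ (f^[n] ⁻¹' {x₀}) = μ {x₀} := fun n =>
    (hmp.iterate n).measure_preimage (measurableSet_singleton x₀).nullMeasurableSet
  -- find two iterated preimages of {x₀} that intersect
  have hnd : ¬ Pairwise (Function.onFun Disjoint (fun n : ℕ => f^[n] ⁻¹' {x₀})) := by
    intro hd
    have hU : μ (⋃ n : ℕ, f^[n] ⁻¹' {x₀}) = ∑' (_ : ℕ), μ {x₀} := by
      rw [measure_iUnion hd (fun n => hmeas n (measurableSet_singleton x₀))]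
      simp [hpre]
    have htop : (∑' (_ : ℕ), μ {x₀}) = ⊤ := ENNReal.tsum_const_eq_top_of_ne_zero hx₀.ne'
    have : μ (⋃ n : ℕ, f^[n] ⁻¹' {x₀}) ≤ 1 := prob_le_one
    rw [hU, htop] at this
    exact (ENNReal.top_ne_one (le_antisymm this le_top)).elim
  rw [Pairwise] at hnd
  push_neg at hnd
  obtain ⟨n, m, hnm, hndisj⟩ := hnd
  obtain ⟨y, hyn, hym⟩ := Set.not_disjoint_iff.1 hndisj
  simp only [Set.mem_preimage, Set.mem_singleton_iff] at hyn hym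
  -- x₀ is periodic
  have hper : ∃ p : ℕ, 1 ≤ p ∧ f^[p] x₀ = x₀ := by
    rcases Ne.lt_or_gt hnm with h | h
    · refine ⟨m - n, by omega, ?_⟩
      have h2 : f^[m - n] x₀ = f^[m] y := by
        rw [← hyn, ← Function.iterate_add_apply, Nat.sub_add_cancel h.le]
      rw [h2, hym]
    · refine ⟨n - m, by omega, ?_⟩
      have h2 : f^[n - m] x₀ = f^[n] y := by
        rw [← hym, ← Function.iterate_add_apply, Nat.sub_add_cancel h.le]
      rw [h2, hyn]
  classical
  set k := Nat.find hper with hk_def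
  obtain ⟨hk1, hkx⟩ : 1 ≤ k ∧ f^[k] x₀ = x₀ := Nat.find_spec hper
  -- distinctness of the orbit points
  have hinj : ∀ i j : ℕ, i < k → j < k → f^[i] x₀ = f^[j] x₀ → i = j := by
    have key : ∀ i j : ℕ, i < j → j < k → f^[i] x₀ = f^[j] x₀ → False := by
      intro i j hij hjk heq
      have h1 : f^[k - j + i] x₀ = x₀ := by
        have : f^[k - j] (f^[j] x₀) = x₀ := by
          rw [← Function.iterate_add_apply, Nat.sub_add_cancel hjk.le, hkx]
        rw [← heq, ← Function.iterate_add_apply] at this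
        exact this
      have := Nat.find_min hper (m := k - j + i) (by omega)
      exact this ⟨by omega, h1⟩
    intro i j hi hj heq
    rcases lt_trichotomy i j with h | h | h
    · exact absurd heq (fun heq => key i j h hj heq)
    · exact h
    · exact absurd heq.symm (fun heq => key j i h hi heq)
  have hk0 : (k : ENNReal) ≠ 0 := by exact_mod_cast (by omega : k ≠ 0)
  have hktop : (k : ENNReal) ≠ ⊤ := ENNReal.natCast_ne_top k
  -- the orbit set
  set S : Set X := ⋃ i ∈ Finset.range k, ({f^[i] x₀} : Set X) with hS_def
  have hS_meas : MeasurableSet S :=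
    Finset.measurableSet_biUnion _ (fun i _ => measurableSet_singleton _)
  have hmemS : ∀ y, y ∈ S ↔ ∃ i < k, f^[i] x₀ = y := by
    intro y
    simp [hS_def, eq_comm]
  -- S is almost invariant
  have hsub : S ⊆ f ⁻¹' S := by
    intro y hy
    obtain ⟨i, hi, rfl⟩ := (hmemS y).1 hy
    have : f (f^[i] x₀) = f^[i + 1] x₀ := (Function.iterate_succ_apply' f i x₀).symm
    simp only [Set.mem_preimage, this]
    rcases eq_or_lt_of_le (Nat.succ_le_of_lt hi) with h | h
    · rw [hmemS]; exact ⟨0, by omega, by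
        simp only [Function.iterate_zero_apply]
        rw [show i + 1 = k from h, hkx]⟩
    · rw [hmemS]; exact ⟨i + 1, h, rfl⟩
  -- all orbit point masses are equal
  have hstep : ∀ i : ℕ, μ {f^[i] x₀} ≤ μ {f^[i + 1] x₀} := by
    intro i
    have h1 : ({f^[i] x₀} : Set X) ⊆ f ⁻¹' {f^[i + 1] x₀} := by
      intro z hz
      simp only [Set.mem_singleton_iff] at hz
      simp [hz, Function.iterate_succ_apply' f i x₀]
    calc μ {f^[i] x₀} ≤ μ (f ⁻¹' {f^[i + 1] x₀}) := measure_mono h1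
      _ = μ {f^[i + 1] x₀} :=
        hmp.measure_preimage (measurableSet_singleton _).nullMeasurableSet
  have hmono : ∀ i j : ℕ, i ≤ j → μ {f^[i] x₀} ≤ μ {f^[j] x₀} := by
    intro i j hij
    induction j with
    | zero => simp [Nat.le_zero.1 hij]
    | succ j ih =>
      rcases Nat.lt_or_ge i (j + 1) with h | h
      · exact (ih (by omega)).trans (hstep j)
      · have : i = j + 1 := by omega
        simp [this]
  have hmass : ∀ i : ℕ, i < k → μ {f^[i] x₀} = μ {x₀} := by
    intro i hi
    refine le_antisymm ?_ (hmono 0 i (Nat.zero_le i))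
    have := hmono i k hi.le
    rwa [hkx] at this
  -- μ S = 1
  have hx₀S : x₀ ∈ S := (hmemS x₀).2 ⟨0, by omega, rfl⟩
  have hSone : μ S = 1 := by
    rcases herg.ae_empty_or_univ_of_ae_le_preimage' hS_meas.nullMeasurableSet
        hsub.eventuallyLE (measure_ne_top μ S) with h | h
    · exfalso
      have : μ S = 0 := ae_eq_empty.1 h
      have : μ {x₀} = 0 := le_antisymm (le_trans (measure_mono (Set.singleton_subset_iff.2 hx₀S)) this.le) zero_le
      exact hx₀.ne' this
    · rw [measure_congr h, measure_univ]
  -- disjointness of the singletons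
  have hdisj : Set.PairwiseDisjoint (↑(Finset.range k)) (fun i => ({f^[i] x₀} : Set X)) := by
    intro i hi j hj hij
    simp only [Finset.coe_range, Set.mem_Iio] at hi hj
    exact Set.disjoint_singleton.2 (fun h => hij (hinj i j hi hj h))
  have hSsum : μ S = ∑ i ∈ Finset.range k, μ {f^[i] x₀} :=
    measure_biUnion_finset hdisj (fun i _ => measurableSet_singleton _)
  have hksum : (k : ENNReal) * μ {x₀} = 1 := by
    rw [← hSone, hSsum, Finset.sum_congr rfl (fun i hi => hmass i (Finset.mem_range.1 hi)),
      Finset.sum_const, Finset.card_range, nsmul_eq_mul]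
  have hc : μ {x₀} = (k : ENNReal)⁻¹ := by
    have : (k : ENNReal)⁻¹ * ((k : ENNReal) * μ {x₀}) = (k : ENNReal)⁻¹ * 1 := by rw [hksum]
    rwa [← mul_assoc, ENNReal.inv_mul_cancel hk0 hktop, one_mul, mul_one] at this
  refine ⟨k, x₀, hk1, hkx, hinj, ?_⟩
  ext s hs
  -- compute both sides
  have hScompl : μ Sᶜ = 0 := by
    rw [measure_compl hS_meas (measure_ne_top μ S), hSone, measure_univ, tsub_self]
  have hdiff : μ (s \ S) = 0 :=
    le_antisymm ((measure_mono (Set.diff_subset_compl s S)).trans hScompl.le) zero_le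
  have hμs : μ s = μ (s ∩ S) := by
    rw [← measure_inter_add_diff s hS_meas, hdiff, add_zero]
  set F : Finset ℕ := (Finset.range k).filter (fun i => f^[i] x₀ ∈ s) with hF_def
  have hsS : s ∩ S = ⋃ i ∈ F, ({f^[i] x₀} : Set X) := by
    ext y
    simp only [Set.mem_inter_iff, hmemS, hF_def, Set.mem_iUnion, Finset.mem_filter,
      Finset.mem_range, Set.mem_singleton_iff, exists_prop]
    constructor
    · rintro ⟨hys, i, hik, rfl⟩
      exact ⟨i, ⟨hik, hys⟩, rfl⟩
    · rintro ⟨i, ⟨hik, his⟩, rfl⟩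
      exact ⟨his, i, hik, rfl⟩
  have hLHS : μ s = (F.card : ENNReal) * (k : ENNReal)⁻¹ := by
    rw [hμs, hsS, measure_biUnion_finset (hdisj.subset (Finset.coe_subset.2 (Finset.filter_subset _ _)))
      (fun i _ => measurableSet_singleton _)]
    rw [Finset.sum_congr rfl (fun i hi => by
      rw [hmass i (Finset.mem_range.1 (Finset.mem_of_mem_filter i hi)), hc]),
      Finset.sum_const, nsmul_eq_mul]
  rw [hLHS, Measure.smul_apply, smul_eq_mul, Measure.finset_sum_apply]
  have : ∀ i ∈ Finset.range k, Measure.dirac (f^[i] x₀) s = if f^[i] x₀ ∈ s then 1 else 0 := by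
    intro i _
    rw [Measure.dirac_apply' _ hs, Set.indicator_apply]
    simp
  rw [Finset.sum_congr rfl this, Finset.sum_boole]
  rw [mul_comm]
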